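/- With the Witt algebra representation ρ_{α,β} on K[z,z^{-1}] (K of characteristic zero), the restriction to sl₂ = span{ξ_{-1}, ξ_0, ξ_1} contains a nonzero finite-dimensional sl₂-submodule if and only if 2α ∈ ℤ, α ≤ 0 (as a half-integer), and α + β ∈ ℤ. When these conditions hold, the finite-dimensional submodule is unique and has dimension -2α + 1. -/

import Mathlib

open LaurentPolynomial

section Aux

variable {K : Type*} [Field K] [CharZero K] {α β : K}
  {ρ : ℤ → LaurentPolynomial K →ₗ[K] LaurentPolynomial K}

/-- Decomposition of a Laurent polynomial into monomials. -/
lemma laurent_decomp (v : LaurentPolynomial K) : v = ∑ n ∈ v.coeff.support, v.coeff n • T n := by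
  conv_lhs => rw [← AddMonoidAlgebra.sum_coeff_single v]
  rw [Finsupp.sum]
  refine Finset.sum_congr rfl fun n _ => ?_
  rw [T, AddMonoidAlgebra.smul_single, smul_eq_mul, mul_one]

lemma T_linearIndependent : LinearIndependent K (fun n : ℤ => (T n : LaurentPolynomial K)) := by
  have := (Finsupp.basisSingleOne (R := K) (ι := ℤ)).linearIndependent.map'
    (AddMonoidAlgebra.coeffLinearEquiv K).symm.toLinearMap (AddMonoidAlgebra.coeffLinearEquiv K).symm.ker
  exact this

/-- Coefficient formula for `ρ i`. -/
lemma coeff_rho (hρ : ∀ i j : ℤ, ρ i (T j) = ((j : K) + α * (i : K) + β) • T (i + j))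
    (i : ℤ) (v : LaurentPolynomial K) (l : ℤ) :
    (ρ i v).coeff l = (((l - i : ℤ) : K) + α * i + β) * v.coeff (l - i) := by
  induction v using AddMonoidAlgebra.induction_linear with
  | zero => rw [map_zero]; show (0 : LaurentPolynomial K).coeff l = _ * (0 : LaurentPolynomial K).coeff (l - i)
            simp
  | add f g hf hg =>
      rw [map_add]
      show (ρ i f).coeff l + (ρ i g).coeff l = _ * (f.coeff (l - i) + g.coeff (l - i))
      rw [hf, hg]; ring
  | single n c =>
      have h1 : (AddMonoidAlgebra.single n c : LaurentPolynomial K) = c • T n := by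
        rw [T, AddMonoidAlgebra.smul_single, smul_eq_mul, mul_one]
      rw [h1, map_smul, hρ, T, T, AddMonoidAlgebra.smul_single, AddMonoidAlgebra.smul_single, AddMonoidAlgebra.smul_single]
      show (Finsupp.single (i + n) _ : ℤ →₀ K) l = _ * (Finsupp.single n _ : ℤ →₀ K) (l - i)
      rw [Finsupp.single_apply, Finsupp.single_apply]
      by_cases h : n = l - i
      · subst h
        rw [if_pos (by omega), if_pos rfl]
        push_cast
        simp only [smul_eq_mul, mul_one]
        ring
      · rw [if_neg (by omega), if_neg h]
        simp

/-- If `V` is stable under `ρ 0` then all monomials of elements of `V` lie in `V`. -/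
lemma T_mem_of_mem (hρ : ∀ i j : ℤ, ρ i (T j) = ((j : K) + α * (i : K) + β) • T (i + j))
    {V : Submodule K (LaurentPolynomial K)} (hV0 : ∀ v ∈ V, ρ 0 v ∈ V) :
    ∀ (N : ℕ) (v : LaurentPolynomial K), v ∈ V → v.coeff.support.card ≤ N →
      ∀ j ∈ v.coeff.support, T j ∈ V := by
  intro N
  induction N with
  | zero =>
      intro v _ hc j hj
      rw [Nat.le_zero, Finset.card_eq_zero] at hc
      rw [hc] at hj; simp at hj
  | succ N ih =>
      intro v hv hc j hj
      by_cases hone : v.coeff.support ⊆ {j}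
      · have hjv : v.coeff j ≠ 0 := Finsupp.mem_support_iff.mp hj
        have hsup : v.coeff.support = {j} := Finset.Subset.antisymm hone (Finset.singleton_subset_iff.mpr hj)
        have hvT : v = v.coeff j • T j := by
          conv_lhs => rw [laurent_decomp v]
          rw [hsup, Finset.sum_singleton]
        have key : (v.coeff j)⁻¹ • v = T j := by
          nth_rewrite 2 [hvT]
          rw [smul_smul, inv_mul_cancel₀ hjv, one_smul]
        rw [← key]
        exact V.smul_mem _ hv
      · obtain ⟨k, hk, hkj⟩ : ∃ k ∈ v.coeff.support, k ≠ j := by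
          by_contra h
          push_neg at h
          exact hone fun x hx => Finset.mem_singleton.mpr (h x hx)
        set w : LaurentPolynomial K := ρ 0 v - ((k : K) + β) • v with hw
        have hwV : w ∈ V := V.sub_mem (hV0 v hv) (V.smul_mem _ hv)
        have hwcoeff : ∀ l : ℤ, w.coeff l = ((l : K) - (k : K)) * v.coeff l := by
          intro l
          show (ρ 0 v).coeff l - (((k : K) + β) • v).coeff l = _
          rw [coeff_rho hρ, AddMonoidAlgebra.coeff_smul_apply, smul_eq_mul]
          push_cast
          ring
        have hwsupp : w.coeff.support = v.coeff.support.erase k := by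
          ext l
          simp only [Finsupp.mem_support_iff, Finset.mem_erase, hwcoeff]
          constructor
          · intro h
            refine ⟨fun hlk => ?_, fun hvl => h (by rw [hvl, mul_zero])⟩
            apply h
            rw [hlk, sub_self, zero_mul]
          · rintro ⟨hlk, hvl⟩
            have : (l : K) - (k : K) ≠ 0 := by
              rw [sub_ne_zero]
              exact fun hc => hlk (Int.cast_injective hc)
            exact mul_ne_zero this hvl
        refine ih w hwV ?_ j ?_
        · rw [hwsupp]
          have := Finset.card_erase_of_mem hk
          omega
        · rw [hwsupp]
          exact Finset.mem_erase.mpr ⟨Ne.symm hkj, hj⟩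

end Aux

section Main

variable {K : Type*} [Field K] [CharZero K] {α β : K}
  {ρ : ℤ → LaurentPolynomial K →ₗ[K] LaurentPolynomial K}

lemma smul_cancel_mem {V : Submodule K (LaurentPolynomial K)} {c : K} {x : LaurentPolynomial K}
    (hc : c ≠ 0) (h : c • x ∈ V) : x ∈ V := by
  have := V.smul_mem c⁻¹ h
  rwa [smul_smul, inv_mul_cancel₀ hc, one_smul] at this

lemma analyze (hρ : ∀ i j : ℤ, ρ i (T j) = ((j : K) + α * (i : K) + β) • T (i + j))
    {V : Submodule K (LaurentPolynomial K)}
    (hV : V ≠ ⊥ ∧ FiniteDimensional K V ∧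
      ∀ v ∈ V, ρ 1 v ∈ V ∧ ρ 0 v ∈ V ∧ ρ (-1) v ∈ V) :
    ∃ jmin jmax : ℤ, jmin ≤ jmax ∧ ((jmax : K) + α + β = 0) ∧ ((jmin : K) - α + β = 0) ∧
      T jmin ∈ V ∧ ∀ v ∈ V, ∀ n ∈ v.coeff.support, T n ∈ V ∧ jmin ≤ n ∧ n ≤ jmax := by
  obtain ⟨hbot, hfd, hstab⟩ := hV
  have hV0 : ∀ v ∈ V, ρ 0 v ∈ V := fun v hv => (hstab v hv).2.1
  have hTmem : ∀ v ∈ V, ∀ j ∈ v.coeff.support, T j ∈ V :=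
    fun v hv => T_mem_of_mem hρ hV0 v.coeff.support.card v hv le_rfl
  set S : Set ℤ := {j | T j ∈ V} with hS
  have hSfin : S.Finite := by
    have hli0 : LinearIndependent K (fun j : S => (T j.1 : LaurentPolynomial K)) :=
      T_linearIndependent.comp (Subtype.val) Subtype.val_injective
    have hli : LinearIndependent K (fun j : S => (⟨T j.1, j.2⟩ : V)) :=
      hli0.of_comp V.subtype
    have : Finite S := hli.finite
    exact Set.toFinite S
  obtain ⟨v, hvV, hvne⟩ := (Submodule.ne_bot_iff V).mp hbot
  obtain ⟨n0, hn0⟩ : v.coeff.support.Nonempty :=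
    Finsupp.support_nonempty_iff.mpr (mt AddMonoidAlgebra.coeff_eq_zero.mp hvne)
  have hmem_iff : ∀ j, j ∈ hSfin.toFinset ↔ T j ∈ V := by
    intro j; rw [Set.Finite.mem_toFinset]; rfl
  have hSne : hSfin.toFinset.Nonempty := ⟨n0, (hmem_iff n0).mpr (hTmem v hvV n0 hn0)⟩
  set jmax := hSfin.toFinset.max' hSne with hjmaxdef
  set jmin := hSfin.toFinset.min' hSne with hjmindef
  have claim1 : (jmax : K) + α + β = 0 := by
    by_contra h
    have hTmax : T jmax ∈ V := (hmem_iff _).mp (hSfin.toFinset.max'_mem hSne)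
    have hmem := (hstab _ hTmax).1
    rw [hρ 1 jmax] at hmem
    have hco : ((jmax : K) + α * ((1 : ℤ) : K) + β) ≠ 0 := by
      intro hc; apply h; push_cast at hc ⊢; linear_combination hc
    have hT1 : T (1 + jmax) ∈ V := smul_cancel_mem hco hmem
    have := hSfin.toFinset.le_max' _ ((hmem_iff _).mpr hT1)
    omega
  have claim2 : (jmin : K) - α + β = 0 := by
    by_contra h
    have hTmin : T jmin ∈ V := (hmem_iff _).mp (hSfin.toFinset.min'_mem hSne)
    have hmem := (hstab _ hTmin).2.2
    rw [hρ (-1) jmin] at hmem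
    have hco : ((jmin : K) + α * ((-1 : ℤ) : K) + β) ≠ 0 := by
      intro hc; apply h; push_cast at hc ⊢; linear_combination hc
    have hT1 : T (-1 + jmin) ∈ V := smul_cancel_mem hco hmem
    have := hSfin.toFinset.min'_le _ ((hmem_iff _).mpr hT1)
    omega
  refine ⟨jmin, jmax, hSfin.toFinset.min'_le _ (hSfin.toFinset.max'_mem hSne), claim1, claim2,
    (hmem_iff _).mp (hSfin.toFinset.min'_mem hSne), fun w hw n hn => ?_⟩
  have hTn : T n ∈ V := hTmem w hw n hn
  have hnS : n ∈ hSfin.toFinset := (hmem_iff _).mpr hTn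
  exact ⟨hTn, hSfin.toFinset.min'_le _ hnS, hSfin.toFinset.le_max' _ hnS⟩

end Main

section Main2

variable {K : Type*} [Field K] [CharZero K] {α β : K}
  {ρ : ℤ → LaurentPolynomial K →ₗ[K] LaurentPolynomial K}

lemma T_inj : Function.Injective (T : ℤ → LaurentPolynomial K) :=
  fun _ _ h => AddMonoidAlgebra.single_left_injective one_ne_zero h

noncomputable local instance (K : Type*) [Field K] : DecidableEq (LaurentPolynomial K) :=
  Classical.decEq _

/-- The candidate submodule. -/
noncomputable def V0 (K : Type*) [Field K] (m : ℕ) (a : ℤ) : Submodule K (LaurentPolynomial K) :=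
  Submodule.span K
    (((Finset.Icc (-a - (m : ℤ)) (-a)).image (T : ℤ → LaurentPolynomial K) :
      Finset (LaurentPolynomial K)) : Set (LaurentPolynomial K))

lemma V0_def (K : Type*) [Field K] (m : ℕ) (a : ℤ) : V0 K m a = Submodule.span K
    (((Finset.Icc (-a - (m : ℤ)) (-a)).image (T : ℤ → LaurentPolynomial K) :
      Finset (LaurentPolynomial K)) : Set (LaurentPolynomial K)) := rfl

lemma T_mem_V0 {m : ℕ} {a j : ℤ} (hj : j ∈ Finset.Icc (-a - (m : ℤ)) (-a)) :
    T j ∈ V0 K m a :=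
  Submodule.subset_span (Finset.mem_coe.mpr (Finset.mem_image_of_mem T hj))

lemma V0_cond (hρ : ∀ i j : ℤ, ρ i (T j) = ((j : K) + α * (i : K) + β) • T (i + j))
    {m : ℕ} (hm : α = -(m : K) / 2) {a : ℤ} (ha : α + β = (a : K)) :
    (V0 K m a) ≠ ⊥ ∧ FiniteDimensional K (V0 K m a) ∧
      ∀ v ∈ V0 K m a, ρ 1 v ∈ V0 K m a ∧ ρ 0 v ∈ V0 K m a ∧ ρ (-1) v ∈ V0 K m a := by
  have hma : (-a : ℤ) ∈ Finset.Icc (-a - (m : ℤ)) (-a) := Finset.mem_Icc.mpr ⟨by omega, le_rfl⟩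
  refine ⟨?_, ?_, ?_⟩
  · rw [Submodule.ne_bot_iff]
    refine ⟨T (-a), T_mem_V0 hma, fun hc => ?_⟩
    have h1 : (T (-a) : LaurentPolynomial K).coeff (-a) = 1 := by rw [T_apply, if_pos rfl]
    have h0 : (0 : LaurentPolynomial K).coeff (-a) = 0 := rfl
    rw [hc, h0] at h1
    exact zero_ne_one h1
  · rw [V0_def]; exact FiniteDimensional.span_finset K _
  · intro v hv
    have key : ∀ i : ℤ, (∀ j ∈ Finset.Icc (-a - (m : ℤ)) (-a), ρ i (T j) ∈ V0 K m a) →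
        ρ i v ∈ V0 K m a := by
      intro i hgen
      rw [V0_def] at hv ⊢
      induction hv using Submodule.span_induction with
      | mem x hx =>
          obtain ⟨j, hj, rfl⟩ := Finset.mem_image.mp (Finset.mem_coe.mp hx)
          rw [← V0_def]
          exact hgen j hj
      | zero => show ρ i 0 ∈ _; rw [map_zero]; exact Submodule.zero_mem _
      | add x y hx hy ihx ihy =>
          show ρ i (x + y) ∈ _
          rw [map_add]; exact Submodule.add_mem _ ihx ihy
      | smul c x hx ihx =>
          show ρ i (c • x) ∈ _
          rw [map_smul]; exact Submodule.smul_mem _ c ihx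
    refine ⟨key 1 fun j hj => ?_, key 0 fun j hj => ?_, key (-1) fun j hj => ?_⟩
    · rw [hρ 1 j]
      by_cases hja : j = -a
      · have hc0 : ((j : K) + α * ((1 : ℤ) : K) + β) = 0 := by
          subst hja; push_cast; linear_combination ha
        rw [hc0, zero_smul]; exact Submodule.zero_mem _
      · refine Submodule.smul_mem _ _ (T_mem_V0 ?_)
        rw [Finset.mem_Icc] at hj ⊢; omega
    · rw [hρ 0 j, zero_add]
      exact Submodule.smul_mem _ _ (T_mem_V0 hj)
    · rw [hρ (-1) j]
      by_cases hja : j = -a - m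
      · have hc0 : ((j : K) + α * ((-1 : ℤ) : K) + β) = 0 := by
          subst hja; push_cast; linear_combination ha - 2 * hm
        rw [hc0, zero_smul]; exact Submodule.zero_mem _
      · refine Submodule.smul_mem _ _ (T_mem_V0 ?_)
        rw [Finset.mem_Icc] at hj ⊢; omega

lemma V0_unique (hρ : ∀ i j : ℤ, ρ i (T j) = ((j : K) + α * (i : K) + β) • T (i + j))
    {m : ℕ} (hm : α = -(m : K) / 2) {a : ℤ} (ha : α + β = (a : K))
    {V : Submodule K (LaurentPolynomial K)}
    (hV : V ≠ ⊥ ∧ FiniteDimensional K V ∧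
      ∀ v ∈ V, ρ 1 v ∈ V ∧ ρ 0 v ∈ V ∧ ρ (-1) v ∈ V) :
    V = V0 K m a := by
  obtain ⟨jmin, jmax, hle, c1, c2, hTmin, hall⟩ := analyze hρ hV
  obtain ⟨-, -, hstab⟩ := hV
  have hjmax : jmax = -a := by
    have : (jmax : K) = (((-a : ℤ)) : K) := by push_cast; linear_combination c1 - ha
    exact Int.cast_injective this
  have hjmin : jmin = -a - m := by
    have : (jmin : K) = (((-a - (m : ℤ) : ℤ)) : K) := by push_cast; linear_combination c2 - ha + 2 * hm
    exact Int.cast_injective this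
  apply le_antisymm
  · intro v hv
    rw [laurent_decomp v]
    refine Submodule.sum_mem _ fun n hn => Submodule.smul_mem _ _ ?_
    obtain ⟨hTn, h1, h2⟩ := hall v hv n hn
    exact T_mem_V0 (Finset.mem_Icc.mpr ⟨by omega, by omega⟩)
  · rw [V0_def, Submodule.span_le]
    intro x hx
    obtain ⟨j, hj, rfl⟩ := Finset.mem_image.mp (Finset.mem_coe.mp hx)
    have claim : ∀ k : ℕ, k ≤ m → T ((-a : ℤ) - m + k) ∈ V := by
      intro k
      induction k with
      | zero =>
          intro _
          rw [show ((-a : ℤ) - m + ((0 : ℕ) : ℤ)) = jmin by omega]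
          exact hTmin
      | succ k ih =>
          intro hk1
          have hTk := ih (by omega)
          have hmem := (hstab _ hTk).1
          rw [hρ 1 _] at hmem
          have hco : ((((-a : ℤ) - m + k : ℤ) : K) + α * ((1 : ℤ) : K) + β) ≠ 0 := by
            have hrw : ((((-a : ℤ) - m + k : ℤ) : K) + α * ((1 : ℤ) : K) + β)
                = (((-(m : ℤ) + k : ℤ)) : K) := by push_cast; linear_combination ha
            rw [hrw, Int.cast_ne_zero]
            omega
          have hT1 := smul_cancel_mem hco hmem
          rw [show ((-a : ℤ) - m + ((k + 1 : ℕ) : ℤ)) = 1 + ((-a : ℤ) - m + k) by push_cast; ring]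
          exact hT1
    have hj' := Finset.mem_Icc.mp hj
    have := claim (j + a + m).toNat (by omega)
    rwa [show ((-a : ℤ) - m + ((j + a + m).toNat : ℤ)) = j by omega] at this

lemma V0_finrank (m : ℕ) (a : ℤ) : Module.finrank K (V0 K m a) = m + 1 := by
  have hsub : ((((Finset.Icc (-a - (m : ℤ)) (-a)).image (T : ℤ → LaurentPolynomial K)) :
        Finset (LaurentPolynomial K)) : Set (LaurentPolynomial K))
      ⊆ Set.range (T : ℤ → LaurentPolynomial K) := by
    intro x hx
    obtain ⟨j, _, rfl⟩ := Finset.mem_image.mp (Finset.mem_coe.mp hx)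
    exact ⟨j, rfl⟩
  have hli : LinearIndependent K
      ((↑) : ((((Finset.Icc (-a - (m : ℤ)) (-a)).image (T : ℤ → LaurentPolynomial K)) :
        Finset (LaurentPolynomial K)) : Set (LaurentPolynomial K)) →
        LaurentPolynomial K) :=
    ((linearIndepOn_id_range_iff T_linearIndependent.injective).mpr T_linearIndependent).mono hsub
  rw [V0_def, finrank_span_finset_eq_card hli, Finset.card_image_of_injective _ T_inj,
    Int.card_Icc]
  omega

end Main2

open LaurentPolynomial in
/-- `V_{α,β}` restricted to `sl₂ = span{ξ₋₁, ξ₀, ξ₁}` contains a nonzero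
finite-dimensional submodule iff `α` is a non-positive half-integer and `α + β ∈ ℤ`;
in that case the submodule is unique and has dimension `-2α + 1`. -/
theorem finite_submodule_iff (K : Type*) [Field K] [CharZero K] (α β : K)
    (ρ : ℤ → LaurentPolynomial K →ₗ[K] LaurentPolynomial K)
    (hρ : ∀ i j : ℤ, ρ i (T j) = ((j : K) + α * (i : K) + β) • T (i + j)) :
    ((∃ V : Submodule K (LaurentPolynomial K), V ≠ ⊥ ∧ FiniteDimensional K V ∧
        ∀ v ∈ V, ρ 1 v ∈ V ∧ ρ 0 v ∈ V ∧ ρ (-1) v ∈ V) ↔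
      ((∃ m : ℕ, α = -(m : K) / 2) ∧ ∃ a : ℤ, α + β = (a : K))) ∧
    (∀ m : ℕ, α = -(m : K) / 2 → (∃ a : ℤ, α + β = (a : K)) →
      (∃! V : Submodule K (LaurentPolynomial K), V ≠ ⊥ ∧ FiniteDimensional K V ∧
          ∀ v ∈ V, ρ 1 v ∈ V ∧ ρ 0 v ∈ V ∧ ρ (-1) v ∈ V) ∧
        ∀ V : Submodule K (LaurentPolynomial K),
          (V ≠ ⊥ ∧ FiniteDimensional K V ∧
            ∀ v ∈ V, ρ 1 v ∈ V ∧ ρ 0 v ∈ V ∧ ρ (-1) v ∈ V) →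
          Module.finrank K V = m + 1) := by
  constructor
  · constructor
    · rintro ⟨V, hV⟩
      obtain ⟨jmin, jmax, hle, c1, c2, -, -⟩ := analyze hρ hV
      refine ⟨⟨(jmax - jmin).toNat, ?_⟩, ⟨-jmax, ?_⟩⟩
      · have hZ : (((jmax - jmin).toNat : ℕ) : ℤ) = jmax - jmin := by omega
        have hcast : (((jmax - jmin).toNat : ℕ) : K) = ((jmax : K) - (jmin : K)) :=
          calc (((jmax - jmin).toNat : ℕ) : K)
              = ((((jmax - jmin).toNat : ℕ) : ℤ) : K) := by push_cast; ring
            _ = ((jmax - jmin : ℤ) : K) := by rw [hZ]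
            _ = (jmax : K) - (jmin : K) := by push_cast; ring
        rw [hcast]
        linear_combination (c1 - c2) / 2
      · push_cast
        linear_combination c1
    · rintro ⟨⟨m, hm⟩, ⟨a, ha⟩⟩
      exact ⟨V0 K m a, V0_cond hρ hm ha⟩
  · intro m hm ⟨a, ha⟩
    refine ⟨⟨V0 K m a, V0_cond hρ hm ha, fun V hV => V0_unique hρ hm ha hV⟩, fun V hV => ?_⟩
    rw [V0_unique hρ hm ha hV]
    exact V0_finrank m a
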